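/- With Γ(N) as in the grand sum (Γ(N) = ∑_{∑k_i = N} ∏ C(k_i+g_i-1, k_i) e^{-β∑λ_i k_i}), for every N ≥ 1 and β > 0: Γ(N)² > Γ(N-1)·Γ(N+1), provided G = ∑ g_i ≥ 2. -/

import Mathlib

noncomputable def GammaSum (n : ℕ) (lam : Fin n → ℝ) (g : Fin n → ℕ) (β : ℝ) (N : ℕ) : ℝ :=
  ∑ k ∈ Finset.Nat.antidiagonalTuple n N,
    (∏ i, ((k i + g i - 1).choose (k i) : ℝ)) * Real.exp (-β * ∑ i, lam i * (k i : ℝ))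

/-! ### Auxiliary definitions and lemmas -/

noncomputable def conv (a b : ℕ → ℝ) (m : ℕ) : ℝ := ∑ k ∈ Finset.range (m+1), a k * b (m - k)

noncomputable def Aseq (g : ℕ) (c : ℝ) (k : ℕ) : ℝ :=
  ((k + g - 1).choose k : ℝ) * Real.exp (c * k)

lemma double_sum_id (s : Finset ℕ) (f g u v : ℕ → ℝ) :
    ∑ i ∈ s, ∑ j ∈ s, (f i * g j - f j * g i) * (u i * v j - u j * v i)
      = 2 * ((∑ i ∈ s, f i * u i) * (∑ i ∈ s, g i * v i)
          - (∑ i ∈ s, f i * v i) * (∑ i ∈ s, g i * u i)) := by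
  have h : ∀ i ∈ s, ∑ j ∈ s, (f i * g j - f j * g i) * (u i * v j - u j * v i)
      = (f i * u i) * ∑ j ∈ s, g j * v j + (g i * v i) * ∑ j ∈ s, f j * u j
        - (f i * v i) * ∑ j ∈ s, g j * u j - (g i * u i) * ∑ j ∈ s, f j * v j := by
    intro i _
    rw [Finset.mul_sum, Finset.mul_sum, Finset.mul_sum, Finset.mul_sum,
      ← Finset.sum_add_distrib, ← Finset.sum_sub_distrib, ← Finset.sum_sub_distrib]
    exact Finset.sum_congr rfl fun j _ => by ring
  rw [Finset.sum_congr rfl h]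
  simp only [Finset.sum_sub_distrib, Finset.sum_add_distrib, ← Finset.sum_mul]
  ring

lemma ratio_le (a : ℕ → ℝ) (hpos : ∀ k, 0 < a k)
    (hlc : ∀ k, a k * a (k+2) ≤ a (k+1)^2) :
    ∀ k l, k ≤ l → a k * a (l+1) ≤ a (k+1) * a l := by
  intro k l hkl
  induction l with
  | zero => interval_cases k; nlinarith [hpos 0, hpos 1]
  | succ m ih =>
    rcases Nat.lt_or_ge k (m+1) with h | h
    · have h1 := ih (Nat.lt_succ_iff.mp h)
      have h2 := hlc m
      have := hpos (m+1); have := hpos k; have := hpos (k+1)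
      have := hpos (m+2); have := hpos m
      nlinarith
    · have : k = m+1 := le_antisymm hkl h
      subst this; nlinarith [hpos (m+1), hpos (m+2)]

lemma conv_pos (a b : ℕ → ℝ) (ha : ∀ k, 0 < a k) (hb : ∀ k, 0 < b k) (m : ℕ) :
    0 < conv a b m :=
  Finset.sum_pos (fun k _ => mul_pos (ha k) (hb (m - k))) ⟨0, by simp⟩

lemma conv_strict (a b : ℕ → ℝ) (ha : ∀ k, 0 < a k)
    (hla : ∀ k, a k * a (k+2) ≤ a (k+1)^2)
    (hb : ∀ k, 0 < b k) (hlb : ∀ k, b k * b (k+2) ≤ b (k+1)^2)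
    (N : ℕ) (hN : 1 ≤ N) :
    conv a b (N-1) * conv a b (N+1) < conv a b N ^ 2 := by
  set s := Finset.range (N+2) with hs
  set f : ℕ → ℝ := a with hf
  set g : ℕ → ℝ := fun j => if j = 0 then 0 else a (j-1) with hg
  set u : ℕ → ℝ := fun j => if j ≤ N then b (N-j) else 0 with hu
  set v : ℕ → ℝ := fun j => b (N+1-j) with hv
  have hfu : ∑ i ∈ s, f i * u i = conv a b N := by
    rw [hs, Finset.sum_range_succ]
    simp only [hu, hf]
    rw [if_neg (by omega)]
    rw [mul_zero, add_zero, conv]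
    exact Finset.sum_congr rfl fun j hj => by
      rw [if_pos (by simpa using Nat.lt_succ_iff.mp (Finset.mem_range.mp hj))]
  have hgv : ∑ i ∈ s, g i * v i = conv a b N := by
    rw [hs, Finset.sum_range_succ']
    simp only [hg, hv, if_pos rfl, zero_mul, add_zero, conv]
    exact Finset.sum_congr rfl fun j hj => by
      rw [if_neg (by omega)]
      congr 2
      omega
  have hfv : ∑ i ∈ s, f i * v i = conv a b (N+1) := by
    rw [hs, conv]
  have hgu : ∑ i ∈ s, g i * u i = conv a b (N-1) := by
    rw [hs, Finset.sum_range_succ, Finset.sum_range_succ']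
    simp only [hg, hu, if_pos rfl, zero_mul, add_zero, if_neg (show ¬ (N+1 ≤ N) by omega), mul_zero]
    rw [conv]
    have : N - 1 + 1 = N := by omega
    rw [this]
    refine Finset.sum_congr rfl fun j hj => ?_
    have hjN : j < N := Finset.mem_range.mp hj
    rw [if_neg (by omega), if_pos (by omega)]
    congr 2
    omega
  have key : ∀ i ∈ s, ∀ j ∈ s,
      0 ≤ (f i * g j - f j * g i) * (u i * v j - u j * v i) := by
    have hmono : ∀ i j : ℕ, i < j → j ≤ N + 1 →
        0 ≤ (f i * g j - f j * g i) ∧ 0 ≤ (u i * v j - u j * v i) := by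
      intro i j hij hjN
      constructor
      · simp only [hf, hg, if_neg (show j ≠ 0 by omega)]
        rcases Nat.eq_zero_or_pos i with hi | hi
        · subst hi
          simp only [if_pos rfl, if_true, mul_zero, sub_zero]
          exact le_of_lt (mul_pos (ha 0) (ha (j-1)))
        · rw [if_neg (by omega)]
          have := ratio_le a ha hla (i-1) (j-1) (by omega)
          have e1 : i - 1 + 1 = i := by omega
          have e2 : j - 1 + 1 = j := by omega
          rw [e1, e2] at this
          linarith [this]
      · simp only [hu, hv, if_pos (show i ≤ N by omega)]
        rcases Nat.lt_or_ge N j with hj | hj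
        · have : j = N + 1 := by omega
          subst this
          rw [if_neg (by omega), zero_mul, sub_zero]
          exact le_of_lt (mul_pos (hb (N-i)) (hb (N+1-(N+1))))
        · rw [if_pos hj]
          have := ratio_le b hb hlb (N-j) (N-i) (by omega)
          have e1 : N - j + 1 = N + 1 - j := by omega
          have e2 : N - i + 1 = N + 1 - i := by omega
          rw [e1, e2] at this
          nlinarith [this]
    intro i hi j hj
    rcases lt_trichotomy i j with h | h | h
    · obtain ⟨h1, h2⟩ := hmono i j h (by simpa [hs, Nat.lt_succ_iff] using Finset.mem_range.mp hj)
      exact mul_nonneg h1 h2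
    · subst h; simp
    · obtain ⟨h1, h2⟩ := hmono j i h (by simpa [hs, Nat.lt_succ_iff] using Finset.mem_range.mp hi)
      have : (f i * g j - f j * g i) * (u i * v j - u j * v i)
          = (f j * g i - f i * g j) * (u j * v i - u i * v j) := by ring
      rw [this]
      exact mul_nonneg h1 h2
  have hpos : 0 < ∑ i ∈ s, ∑ j ∈ s, (f i * g j - f j * g i) * (u i * v j - u j * v i) := by
    refine Finset.sum_pos' (fun i hi => Finset.sum_nonneg (fun j hj => key i hi j hj)) ?_
    refine ⟨0, by simp [hs], ?_⟩
    refine Finset.sum_pos' (fun j hj => key 0 (by simp [hs]) j hj) ⟨N+1, by simp [hs], ?_⟩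
    simp only [hf, hg, hu, hv, if_true, if_neg (show (N+1) ≠ 0 by omega), if_pos (show (0:ℕ) ≤ N by omega),
      if_neg (show ¬ (N+1 ≤ N) by omega)]
    have e : N + 1 - (N+1) = 0 := by omega
    rw [e]
    have e2 : N - 0 = N := by omega
    rw [e2]
    have : (0:ℝ) < a 0 * a (N+1-1) * (b N * b 0) := by
      exact mul_pos (mul_pos (ha 0) (ha _)) (mul_pos (hb N) (hb 0))
    nlinarith [this]
  have hid := double_sum_id s f g u v
  rw [hfu, hgv, hfv, hgu] at hid
  nlinarith [hid, hpos]

lemma choose_id (g' k : ℕ) :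
    ((k + g').choose k) * ((k + g' + 2).choose (k + 2)) * ((k+2) * (k+g'+1))
      = ((k + g' + 1).choose (k+1))^2 * ((k+1) * (k+g'+2)) := by
  have h1 : (k + g' + 1) * (k + g').choose k = (k + g' + 1).choose (k + 1) * (k + 1) :=
    Nat.add_one_mul_choose_eq (k + g') k
  have h2 : (k + g' + 2) * (k + g' + 1).choose (k+1) = (k + g' + 2).choose (k + 2) * (k + 2) :=
    Nat.add_one_mul_choose_eq (k + g' + 1) (k+1)
  calc ((k + g').choose k) * ((k + g' + 2).choose (k + 2)) * ((k+2) * (k+g'+1))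
      = ((k + g' + 1) * (k + g').choose k) * ((k + g' + 2).choose (k + 2) * (k + 2)) := by ring
    _ = ((k + g' + 1).choose (k + 1) * (k + 1)) * ((k + g' + 2) * (k + g' + 1).choose (k+1)) := by
        rw [h1, h2]
    _ = ((k + g' + 1).choose (k+1))^2 * ((k+1) * (k+g'+2)) := by ring

lemma choose_cast_id (g' k : ℕ) :
    (((k + g').choose k : ℝ)) * (((k + g' + 2).choose (k + 2) : ℝ)) * (((k:ℝ)+2) * ((k:ℝ)+g'+1))
      = (((k + g' + 1).choose (k+1) : ℝ))^2 * (((k:ℝ)+1) * ((k:ℝ)+g'+2)) := by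
  exact_mod_cast congrArg (Nat.cast : ℕ → ℝ) (choose_id g' k)

lemma Aseq_pos (g : ℕ) (hg : 1 ≤ g) (c : ℝ) (k : ℕ) : 0 < Aseq g c k := by
  unfold Aseq
  have : 0 < (k + g - 1).choose k := Nat.choose_pos (by omega)
  positivity

lemma choose_le (g' k : ℕ) :
    (((k + g').choose k : ℝ)) * (((k + g' + 2).choose (k + 2) : ℝ))
      ≤ (((k + g' + 1).choose (k+1) : ℝ))^2 := by
  have h3 := choose_cast_id g' k
  set X : ℝ := (((k + g' + 1).choose (k+1) : ℝ))
  have hle : ((k:ℝ)+1) * ((k:ℝ)+g'+2) ≤ ((k:ℝ)+2) * ((k:ℝ)+g'+1) := by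
    nlinarith [Nat.cast_nonneg (α := ℝ) g', Nat.cast_nonneg (α := ℝ) k]
  have hA : (0:ℝ) < ((k:ℝ)+2) * ((k:ℝ)+g'+1) := by positivity
  have h4 := mul_le_mul_of_nonneg_left hle (sq_nonneg X)
  rw [← h3] at h4
  exact le_of_mul_le_mul_right h4 hA

lemma choose_lt (g' k : ℕ) (hg' : 1 ≤ g') :
    (((k + g').choose k : ℝ)) * (((k + g' + 2).choose (k + 2) : ℝ))
      < (((k + g' + 1).choose (k+1) : ℝ))^2 := by
  have h3 := choose_cast_id g' k
  have hX : (0:ℝ) < (((k + g' + 1).choose (k+1) : ℝ)) := by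
    exact_mod_cast Nat.choose_pos (show k+1 ≤ k+g'+1 by omega)
  set X : ℝ := (((k + g' + 1).choose (k+1) : ℝ))
  have hle : ((k:ℝ)+1) * ((k:ℝ)+g'+2) < ((k:ℝ)+2) * ((k:ℝ)+g'+1) := by
    have h1 : (1:ℝ) ≤ (g' : ℝ) := by exact_mod_cast hg'
    nlinarith [Nat.cast_nonneg (α := ℝ) k]
  have hA : (0:ℝ) < ((k:ℝ)+2) * ((k:ℝ)+g'+1) := by positivity
  have h4 := mul_lt_mul_of_pos_left hle (pow_pos hX 2)
  rw [← h3] at h4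
  exact lt_of_mul_lt_mul_right h4 hA.le

lemma Aseq_lc (g : ℕ) (hg : 1 ≤ g) (c : ℝ) (k : ℕ) :
    Aseq g c k * Aseq g c (k+2) ≤ Aseq g c (k+1)^2 := by
  obtain ⟨g', rfl⟩ : ∃ g', g = g' + 1 := ⟨g - 1, by omega⟩
  unfold Aseq
  have e1 : k + (g' + 1) - 1 = k + g' := by omega
  have e2 : k + 2 + (g' + 1) - 1 = k + g' + 2 := by omega
  have e3 : k + 1 + (g' + 1) - 1 = k + g' + 1 := by omega
  rw [e1, e2, e3]
  push_cast
  have hexp : Real.exp (c * k) * Real.exp (c * ((k:ℝ)+2)) = Real.exp (c * ((k:ℝ)+1)) ^ 2 := by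
    rw [← Real.exp_add, sq, ← Real.exp_add]; ring_nf
  have he : (0:ℝ) < Real.exp (c * k) * Real.exp (c * ((k:ℝ)+2)) := by positivity
  calc ((k + g').choose k : ℝ) * Real.exp (c * k) * (((k + g' + 2).choose (k+2) : ℝ) * Real.exp (c * ((k:ℝ)+2)))
      = (((k + g').choose k : ℝ) * ((k + g' + 2).choose (k + 2))) * (Real.exp (c * k) * Real.exp (c * ((k:ℝ)+2))) := by ring
    _ ≤ ((((k + g' + 1).choose (k+1) : ℝ))^2) * (Real.exp (c * k) * Real.exp (c * ((k:ℝ)+2))) :=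
        mul_le_mul_of_nonneg_right (choose_le g' k) he.le
    _ = (((k + g' + 1).choose (k+1) : ℝ) * Real.exp (c * ((k:ℝ)+1)))^2 := by rw [mul_pow, ← hexp]

lemma Aseq_slc (g : ℕ) (hg : 2 ≤ g) (c : ℝ) (k : ℕ) :
    Aseq g c k * Aseq g c (k+2) < Aseq g c (k+1)^2 := by
  obtain ⟨g', rfl⟩ : ∃ g', g = g' + 1 := ⟨g - 1, by omega⟩
  unfold Aseq
  have e1 : k + (g' + 1) - 1 = k + g' := by omega
  have e2 : k + 2 + (g' + 1) - 1 = k + g' + 2 := by omega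
  have e3 : k + 1 + (g' + 1) - 1 = k + g' + 1 := by omega
  rw [e1, e2, e3]
  push_cast
  have hexp : Real.exp (c * k) * Real.exp (c * ((k:ℝ)+2)) = Real.exp (c * ((k:ℝ)+1)) ^ 2 := by
    rw [← Real.exp_add, sq, ← Real.exp_add]; ring_nf
  have he : (0:ℝ) < Real.exp (c * k) * Real.exp (c * ((k:ℝ)+2)) := by positivity
  calc ((k + g').choose k : ℝ) * Real.exp (c * k) * (((k + g' + 2).choose (k+2) : ℝ) * Real.exp (c * ((k:ℝ)+2)))
      = (((k + g').choose k : ℝ) * ((k + g' + 2).choose (k + 2))) * (Real.exp (c * k) * Real.exp (c * ((k:ℝ)+2))) := by ring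
    _ < ((((k + g' + 1).choose (k+1) : ℝ))^2) * (Real.exp (c * k) * Real.exp (c * ((k:ℝ)+2))) :=
        mul_lt_mul_of_pos_right (choose_lt g' k (by omega)) he
    _ = (((k + g' + 1).choose (k+1) : ℝ) * Real.exp (c * ((k:ℝ)+1)))^2 := by rw [mul_pow, ← hexp]

lemma gamma_one (lam : Fin 1 → ℝ) (g : Fin 1 → ℕ) (β : ℝ) (N : ℕ) :
    GammaSum 1 lam g β N = Aseq (g 0) (-β * lam 0) N := by
  unfold GammaSum Aseq
  rw [Finset.Nat.antidiagonalTuple_one, Finset.sum_singleton]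
  simp only [Fin.prod_univ_one, Fin.sum_univ_one, Matrix.cons_val_zero]
  congr 1
  congr 1
  ring

lemma gamma_succ (n : ℕ) (lam : Fin (n+1) → ℝ) (g : Fin (n+1) → ℕ) (β : ℝ) (M : ℕ) :
    GammaSum (n+1) lam g β M
      = ∑ k0 ∈ Finset.range (M+1),
          Aseq (g 0) (-β * lam 0) k0
            * GammaSum n (Fin.tail lam) (Fin.tail g) β (M - k0) := by
  unfold GammaSum
  rw [Finset.sum_congr rfl (fun k0 _ => Finset.mul_sum
    (Finset.Nat.antidiagonalTuple n (M - k0)) _ _)]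
  rw [← Finset.sum_sigma (Finset.range (M+1)) (fun k0 => Finset.Nat.antidiagonalTuple n (M - k0))
    (fun p => Aseq (g 0) (-β * lam 0) p.1
      * ((∏ i : Fin n, ((p.2 i + Fin.tail g i - 1).choose (p.2 i) : ℝ))
        * Real.exp (-β * ∑ i : Fin n, Fin.tail lam i * (p.2 i : ℝ))))]
  refine Finset.sum_nbij' (i := fun k => (⟨k 0, Fin.tail k⟩ : Σ _ : ℕ, Fin n → ℕ))
    (j := fun p => Fin.cons p.1 p.2) ?_ ?_ ?_ ?_ ?_
  · intro k hk
    rw [Finset.Nat.mem_antidiagonalTuple] at hk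
    rw [Fin.sum_univ_succ] at hk
    simp only [Finset.mem_sigma, Finset.mem_range, Finset.Nat.mem_antidiagonalTuple]
    constructor
    · omega
    · unfold Fin.tail; omega
  · intro p hp
    simp only [Finset.mem_sigma, Finset.mem_range, Finset.Nat.mem_antidiagonalTuple] at hp
    rw [Finset.Nat.mem_antidiagonalTuple, Fin.sum_univ_succ]
    simp only [Fin.cons_zero, Fin.cons_succ]
    omega
  · intro k _
    exact Fin.cons_self_tail k
  · intro p _
    exact Sigma.ext (by simp) (by simp [Fin.tail_cons])
  · intro k hk
    rw [Fin.prod_univ_succ, Fin.sum_univ_succ]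
    unfold Aseq Fin.tail
    rw [mul_add, Real.exp_add]
    have : -β * lam 0 * (k 0 : ℝ) = -β * (lam 0 * (k 0 : ℝ)) := by ring
    rw [this]
    ring

lemma gamma_pos_lc : ∀ n : ℕ, 1 ≤ n → ∀ (lam : Fin n → ℝ) (g : Fin n → ℕ),
    (∀ i, 1 ≤ g i) → ∀ β : ℝ,
    (∀ N, 0 < GammaSum n lam g β N) ∧
      (∀ k, GammaSum n lam g β k * GammaSum n lam g β (k+2) ≤ GammaSum n lam g β (k+1)^2) := by
  intro n
  induction n with
  | zero => omega
  | succ m ih =>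
    intro _ lam g hg β
    rcases Nat.eq_zero_or_pos m with hm | hm
    · subst hm
      constructor
      · intro N
        rw [gamma_one]
        exact Aseq_pos _ (hg 0) _ _
      · intro k
        rw [gamma_one, gamma_one, gamma_one]
        exact Aseq_lc _ (hg 0) _ _
    · obtain ⟨hpos, hlc⟩ := ih hm (Fin.tail lam) (Fin.tail g) (fun i => hg i.succ) β
      have hconv : ∀ M, GammaSum (m+1) lam g β M
          = conv (Aseq (g 0) (-β * lam 0))
              (fun N => GammaSum m (Fin.tail lam) (Fin.tail g) β N) M := by
        intro M
        rw [gamma_succ]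
        rfl
      have hA : ∀ k, 0 < Aseq (g 0) (-β * lam 0) k := Aseq_pos _ (hg 0) _
      have hAl : ∀ k, Aseq (g 0) (-β * lam 0) k * Aseq (g 0) (-β * lam 0) (k+2)
          ≤ Aseq (g 0) (-β * lam 0) (k+1)^2 := Aseq_lc _ (hg 0) _
      constructor
      · intro N
        rw [hconv]
        exact conv_pos _ _ hA hpos N
      · intro k
        rw [hconv, hconv, hconv]
        have := conv_strict (Aseq (g 0) (-β * lam 0))
          (fun N => GammaSum m (Fin.tail lam) (Fin.tail g) β N) hA hAl hpos hlc (k+1) (by omega)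
        simpa using this.le

theorem stmt_14 (n : ℕ) (lam : Fin n → ℝ) (g : Fin n → ℕ)
    (hlam : ∀ i, 0 < lam i) (hg : ∀ i, 1 ≤ g i) (hG : 2 ≤ ∑ i, g i)
    (β : ℝ) (hβ : 0 < β) (N : ℕ) (hN : 1 ≤ N) :
    GammaSum n lam g β N ^ 2 > GammaSum n lam g β (N - 1) * GammaSum n lam g β (N + 1) := by
  match n with
  | 0 => simp at hG
  | 1 =>
    rw [gamma_one, gamma_one, gamma_one]
    have hg2 : 2 ≤ g 0 := by simpa [Fin.sum_univ_one] using hG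
    obtain ⟨k, rfl⟩ : ∃ k, N = k + 1 := ⟨N - 1, by omega⟩
    have := Aseq_slc (g 0) hg2 (-β * lam 0) k
    simpa using this
  | (m+2) =>
    obtain ⟨hpos, hlc⟩ := gamma_pos_lc (m+1) (by omega) (Fin.tail lam) (Fin.tail g)
      (fun i => hg i.succ) β
    have hconv : ∀ M, GammaSum (m+2) lam g β M
        = conv (Aseq (g 0) (-β * lam 0))
            (fun X => GammaSum (m+1) (Fin.tail lam) (Fin.tail g) β X) M := by
      intro M
      rw [gamma_succ]
      rfl
    rw [hconv, hconv, hconv]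
    exact conv_strict _ _ (Aseq_pos _ (hg 0) _) (Aseq_lc _ (hg 0) _) hpos hlc N hN
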